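/- Let a₊, a₋ ∈ (0,2)\{1}, let C₊, C₋, λ₊, λ₋, μ₊, μ₋ > 0 and T > 0. Define r : ℝ → ℝ by r(x) = exp(−(λ₊−μ₊)x) for x > 0 and r(x) = exp(−(λ₋−μ₋)|x|) for x < 0, and let ℓ̃ be the GTS Lévy density with parameters (a₊, a₋, C₊, C₋, μ₊, μ₋). Then the function x ↦ (r(x) − log r(x) − 1)·ℓ̃(x) is integrable on ℝ and T·∫_ℝ (r(x) − log r(x) − 1)·ℓ̃(x) dx = T·C₊·Γ(−a₊)·((a₊−1)·μ₊^{a₊} − a₊·λ₊·μ₊^{a₊−1} + λ₊^{a₊}) + T·C₋·Γ(−a₋)·((a₋−1)·μ₋^{a₋} − a₋·λ₋·μ₋^{a₋−1} + λ₋^{a₋}). -/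

import Mathlib

set_option maxHeartbeats 1000000

open MeasureTheory Real Set Filter


/-- FTC-2 on `Ioi 0` with limits at both (open) endpoints. -/
lemma myIntegral_Ioi_zero_of_hasDerivAt_of_tendsto {g g' : ℝ → ℝ} {L M : ℝ}
    (hderiv : ∀ x ∈ Ioi (0:ℝ), HasDerivAt g (g' x) x)
    (hint : IntegrableOn g' (Ioi 0))
    (h0 : Tendsto g (nhdsWithin 0 (Ioi 0)) (nhds L))
    (htop : Tendsto g atTop (nhds M)) :
    ∫ x in Ioi (0:ℝ), g' x = M - L := by
  have key : ∀ ε : ℝ, 0 < ε → ∫ x in Ioi ε, g' x = M - g ε := by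
    intro ε hε
    refine MeasureTheory.integral_Ioi_of_hasDerivAt_of_tendsto
      ((hderiv ε hε).continuousAt.continuousWithinAt)
      (fun x hx => hderiv x (lt_trans hε hx))
      (hint.mono_set (Ioi_subset_Ioi hε.le)) htop
  set s : ℕ → Set ℝ := fun n => Ioi ((n : ℝ) + 1)⁻¹ with hs
  have hpos : ∀ n : ℕ, (0:ℝ) < ((n : ℝ) + 1)⁻¹ := fun n => by positivity
  have hmono : Monotone s := by
    intro i j hij
    apply Ioi_subset_Ioi
    apply inv_anti₀ (by positivity)
    simp [Nat.cast_le.mpr hij]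
  have hunion : (⋃ n, s n) = Ioi (0:ℝ) := by
    ext x
    simp only [hs, mem_iUnion, mem_Ioi]
    constructor
    · rintro ⟨n, hn⟩; exact lt_trans (hpos n) hn
    · intro hx
      obtain ⟨n, hn⟩ := exists_nat_one_div_lt hx
      exact ⟨n, by rwa [one_div] at hn⟩
  have h1 : Tendsto (fun n : ℕ => ∫ x in s n, g' x) atTop (nhds (∫ x in Ioi (0:ℝ), g' x)) := by
    have := tendsto_setIntegral_of_monotone (fun n => measurableSet_Ioi) hmono
      (by rw [hunion]; exact hint)
    rwa [hunion] at this
  have h2 : Tendsto (fun n : ℕ => M - g (((n : ℝ) + 1)⁻¹)) atTop (nhds (M - L)) := by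
    apply Tendsto.const_sub
    apply h0.comp
    apply tendsto_nhdsWithin_of_tendsto_nhds_of_eventually_within
    · have := tendsto_one_div_add_atTop_nhds_zero_nat (𝕜 := ℝ)
      simpa [one_div] using this
    · exact Eventually.of_forall fun n => hpos n
  have heq : (fun n : ℕ => ∫ x in s n, g' x) = fun n : ℕ => M - g (((n : ℝ) + 1)⁻¹) :=
    funext fun n => key _ (hpos n)
  rw [heq] at h1
  exact tendsto_nhds_unique h1 h2

/-- Integrability of `x^p e^{-bx}` on `(0,∞)` for `p > -1`. -/
lemma myE1 {p b : ℝ} (hp : -1 < p) (hb : 0 < b) :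
    IntegrableOn (fun x : ℝ => x ^ p * exp (-(b * x))) (Ioi 0) := by
  have h := integrableOn_rpow_mul_exp_neg_mul_rpow hp (zero_lt_one : (0:ℝ) < 1) hb
  refine h.congr_fun (fun x hx => ?_) measurableSet_Ioi
  simp only [Real.rpow_one, neg_mul]

/-- Integrability of `x^p e^{-bx}` on `(δ,∞)` for any `p`. -/
lemma myE2 {δ b : ℝ} (p : ℝ) (hb : 0 < b) (hδ : 0 < δ) :
    IntegrableOn (fun x : ℝ => x ^ p * exp (-(b * x))) (Ioi δ) := by
  rcases le_or_gt p (-1) with hp | hp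
  · have hint : IntegrableOn (fun x : ℝ => δ ^ p * exp (-b * x)) (Ioi δ) :=
      (exp_neg_integrableOn_Ioi δ hb).const_mul _
    refine Integrable.mono' hint ((by fun_prop : Measurable fun x : ℝ => x ^ p * exp (-(b * x))).aestronglyMeasurable) ?_
    rw [ae_restrict_iff' measurableSet_Ioi]
    refine Eventually.of_forall fun x hx => ?_
    have hx0 : (0:ℝ) < x := lt_trans hδ hx
    rw [norm_mul, norm_of_nonneg (rpow_nonneg hx0.le p), Real.norm_eq_abs,
      abs_of_pos (exp_pos _), neg_mul]
    exact mul_le_mul_of_nonneg_right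
      (Real.rpow_le_rpow_of_nonpos hδ hx.le (le_trans hp (by norm_num)))
      (exp_pos _).le
  · exact (myE1 hp hb).mono_set (Ioi_subset_Ioi hδ.le)

noncomputable def gtsF (l m x : ℝ) : ℝ :=
  exp (-(l*x)) - exp (-(m*x)) + (l-m)*(x*exp (-(m*x)))

noncomputable def gtsF1 (l m x : ℝ) : ℝ :=
  -(l*exp (-(l*x))) + l*exp (-(m*x)) - m*(l-m)*(x*exp (-(m*x)))

noncomputable def gtsF2 (l m x : ℝ) : ℝ :=
  l^2*exp (-(l*x)) - (2*l*m - m^2)*exp (-(m*x)) + m^2*((l-m)*(x*exp (-(m*x))))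

lemma myDexp (b x : ℝ) : HasDerivAt (fun y : ℝ => exp (-(b*y))) (-b * exp (-(b*x))) x := by
  have h := (((hasDerivAt_id x).const_mul b).neg).exp
  convert h using 1 <;> simp [id_eq] <;> ring

lemma myDxexp (b x : ℝ) : HasDerivAt (fun y : ℝ => y * exp (-(b*y)))
    (exp (-(b*x)) - b*(x*exp (-(b*x)))) x := by
  have h := (hasDerivAt_id x).mul (myDexp b x)
  exact h.congr_deriv (by simp only [id_eq]; ring)

lemma gtsF_deriv (l m x : ℝ) : HasDerivAt (fun y => gtsF l m y) (gtsF1 l m x) x := by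
  have h := ((myDexp l x).sub (myDexp m x)).add ((myDxexp m x).const_mul (l-m))
  exact h.congr_deriv (by unfold gtsF1; ring)

lemma gtsF1_deriv (l m x : ℝ) : HasDerivAt (fun y => gtsF1 l m y) (gtsF2 l m x) x := by
  have h := (((myDexp l x).const_mul l).neg.add ((myDexp m x).const_mul l)).sub
    ((myDxexp m x).const_mul (m*(l-m)))
  exact h.congr_deriv (by unfold gtsF2; ring)

lemma gtsF_bound (l m : ℝ) (hm : 0 < m) {x : ℝ} (hx : 0 < x) (hx1 : |l - m| * x ≤ 1) :
    |gtsF l m x| ≤ (l-m)^2 * x^2 := by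
  have habs : |(-((l-m)*x))| ≤ 1 := by
    rwa [abs_neg, abs_mul, abs_of_pos hx]
  have h := Real.abs_exp_sub_one_sub_id_le habs
  have key : gtsF l m x = exp (-(m*x)) * (exp (-((l-m)*x)) - 1 - (-((l-m)*x))) := by
    unfold gtsF
    have e : exp (-(l*x)) = exp (-(m*x)) * exp (-((l-m)*x)) := by
      rw [← exp_add]; ring_nf
    rw [e]; ring
  have hexp : exp (-(m*x)) ≤ 1 := exp_le_one_iff.mpr (by nlinarith)
  rw [key, abs_mul, abs_of_pos (exp_pos _)]
  calc exp (-(m*x)) * |exp (-((l-m)*x)) - 1 - (-((l-m)*x))|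
      ≤ 1 * ((-((l-m)*x))^2) :=
        mul_le_mul hexp h (abs_nonneg _) zero_le_one
    _ = (l-m)^2 * x^2 := by ring

lemma gtsF1_bound (l m : ℝ) (hl : 0 < l) (hm : 0 < m) {x : ℝ} (hx : 0 < x)
    (hx1 : |l - m| * x ≤ 1) :
    |gtsF1 l m x| ≤ (2*l+m)*(|l - m| * x) := by
  have habs : |(-((l-m)*x))| ≤ 1 := by
    rwa [abs_neg, abs_mul, abs_of_pos hx]
  have h := Real.abs_exp_sub_one_le habs
  have key : gtsF1 l m x = exp (-(m*x)) * (-(l * (exp (-((l-m)*x)) - 1)) - m*((l-m)*x)) := by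
    unfold gtsF1
    have e : exp (-(l*x)) = exp (-(m*x)) * exp (-((l-m)*x)) := by
      rw [← exp_add]; ring_nf
    rw [e]; ring
  have hexp : exp (-(m*x)) ≤ 1 := exp_le_one_iff.mpr (by nlinarith)
  rw [key, abs_mul, abs_of_pos (exp_pos _)]
  have h2 : |(-(l * (exp (-((l-m)*x)) - 1)) - m*((l-m)*x))| ≤ (2*l+m)*(|l - m| * x) := by
    have h3 : |(-(l * (exp (-((l-m)*x)) - 1)))| ≤ l * (2*(|l - m| * x)) := by
      rw [abs_neg, abs_mul, abs_of_pos hl]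
      refine mul_le_mul_of_nonneg_left ?_ hl.le
      calc |exp (-((l-m)*x)) - 1| ≤ 2 * |(-((l-m)*x))| := h
        _ = 2*(|l - m| * x) := by rw [abs_neg, abs_mul, abs_of_pos hx]
    have h4 : |m*((l-m)*x)| = m * (|l - m| * x) := by
      rw [abs_mul, abs_mul, abs_of_pos hm, abs_of_pos hx]
    calc |(-(l * (exp (-((l-m)*x)) - 1)) - m*((l-m)*x))|
        ≤ |(-(l * (exp (-((l-m)*x)) - 1)))| + |m*((l-m)*x)| := abs_sub _ _
      _ ≤ l * (2*(|l - m| * x)) + m * (|l - m| * x) := by rw [h4]; exact add_le_add h3 le_rfl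
      _ = (2*l+m)*(|l - m| * x) := by ring
  have h5 : (0:ℝ) ≤ (2*l+m)*(|l - m| * x) := by positivity
  nlinarith [exp_pos (-(m*x)), abs_nonneg (-(l * (exp (-((l-m)*x)) - 1)) - m*((l-m)*x))]

lemma myRpow_succ {x : ℝ} (hx : 0 < x) (p : ℝ) : x ^ (p+1) = x * x ^ p := by
  rw [Real.rpow_add hx, Real.rpow_one]; ring

lemma gtsF_measurable (l m : ℝ) : Measurable (gtsF l m) := by unfold gtsF; fun_prop
lemma gtsF1_measurable (l m : ℝ) : Measurable (gtsF1 l m) := by unfold gtsF1; fun_prop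

lemma gts_side {a l m : ℝ} (ha0 : 0 < a) (ha2 : a < 2) (ha1 : a ≠ 1)
    (hl : 0 < l) (hm : 0 < m) :
    IntegrableOn
      (fun x : ℝ => (exp (-((l-m)*x)) + (l-m)*x - 1) * (exp (-(m*x)) * x ^ (-a-1))) (Ioi 0) ∧
    ∫ x in Ioi (0:ℝ), (exp (-((l-m)*x)) + (l-m)*x - 1) * (exp (-(m*x)) * x ^ (-a-1))
      = Gamma (-a) * ((a-1) * m ^ a - a * l * m ^ (a-1) + l ^ a) := by
  have hane : a ≠ 0 := ne_of_gt ha0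
  have ha1' : (1:ℝ) - a ≠ 0 := fun h => ha1 (by linarith)
  have ha2' : (2:ℝ) - a ≠ 0 := fun h => absurd ha2 (by linarith [h])
  -- the three exponent identities we use repeatedly
  have hxP1 : ∀ x : ℝ, 0 < x → x ^ (-a) = x * x ^ (-a-1) := by
    intro x hx
    have h := myRpow_succ hx (-a-1); rwa [show (-a-1)+(1:ℝ) = -a by ring] at h
  have hxP2 : ∀ x : ℝ, 0 < x → x ^ (1-a) = x * x ^ (-a) := by
    intro x hx
    have h := myRpow_succ hx (-a); rwa [show (-a)+(1:ℝ) = 1-a by ring] at h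
  have hxP3 : ∀ x : ℝ, 0 < x → x ^ (2-a) = x * x ^ (1-a) := by
    intro x hx
    have h := myRpow_succ hx (1-a); rwa [show (1-a)+(1:ℝ) = 2-a by ring] at h
  have hxQ1 : ∀ x : ℝ, 0 < x → x ^ (2:ℕ) * x ^ (-a-1) = x ^ (1-a) := by
    intro x hx
    rw [← Real.rpow_natCast x 2, ← Real.rpow_add hx]
    norm_num
    congr 1
    ring
  have hxQ2 : ∀ x : ℝ, 0 < x → x ^ (2:ℕ) * x ^ (-a) = x ^ (2-a) := by
    intro x hx
    rw [← Real.rpow_natCast x 2, ← Real.rpow_add hx]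
    norm_num
    rw [sub_eq_add_neg]
  -- the integrand in terms of gtsF
  have hfun : (fun x : ℝ => (exp (-((l-m)*x)) + (l-m)*x - 1) * (exp (-(m*x)) * x ^ (-a-1)))
      = fun x : ℝ => gtsF l m x * x ^ (-a-1) := by
    funext x
    have key : exp (-((l-m)*x)) * exp (-(m*x)) = exp (-(l*x)) := by
      rw [← Real.exp_add]; ring_nf
    unfold gtsF
    linear_combination (x ^ (-a-1)) * key
  -- small-x window
  set δ : ℝ := (1 + |l - m|)⁻¹ with hδdef
  have hδ : 0 < δ := by positivity
  have hδ1 : ∀ x : ℝ, x ∈ Ioc (0:ℝ) δ → |l - m| * x ≤ 1 := by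
    intro x hx
    have h1 : |l - m| * x ≤ |l - m| * δ := mul_le_mul_of_nonneg_left hx.2 (abs_nonneg _)
    refine le_trans h1 ?_
    rw [hδdef, inv_eq_one_div, mul_one_div, div_le_one (by positivity)]
    linarith [abs_nonneg (l - m)]
  have hIoc_rpow : ∀ q : ℝ, -1 < q → IntegrableOn (fun x : ℝ => x ^ q) (Ioc 0 δ) := by
    intro q hq
    exact (intervalIntegrable_iff_integrableOn_Ioc_of_le hδ.le).mp (intervalIntegral.intervalIntegrable_rpow' hq)
  have hsplit : Ioc (0:ℝ) δ ∪ Ioi δ = Ioi 0 := Ioc_union_Ioi_eq_Ioi hδ.le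
  -- integrability of the three main functions
  have hH : IntegrableOn (fun x : ℝ => gtsF l m x * x ^ (-a-1)) (Ioi 0) := by
    rw [← hsplit, integrableOn_union]
    constructor
    · refine Integrable.mono' ((hIoc_rpow (1-a) (by linarith)).const_mul ((l-m)^2))
        (((gtsF_measurable l m).mul (by measurability)).aestronglyMeasurable) ?_
      rw [ae_restrict_iff' measurableSet_Ioc]
      refine Eventually.of_forall fun x hx => ?_
      have hx0 := hx.1
      rw [norm_mul, Real.norm_eq_abs, Real.norm_eq_abs, abs_of_nonneg (rpow_nonneg hx0.le _)]
      calc |gtsF l m x| * x ^ (-a-1) ≤ ((l-m)^2 * x^(2:ℕ)) * x ^ (-a-1) :=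
            mul_le_mul_of_nonneg_right (gtsF_bound l m hm hx0 (hδ1 x hx))
              (rpow_nonneg hx0.le _)
        _ = (l-m)^2 * x ^ (1-a) := by rw [mul_assoc, hxQ1 x hx0]
    · have h : IntegrableOn (fun x : ℝ => x ^ (-a-1) * exp (-(l*x))
          - x ^ (-a-1) * exp (-(m*x)) + (l-m) * (x ^ (-a) * exp (-(m*x)))) (Ioi δ) :=
        ((myE2 (-a-1) hl hδ).sub (myE2 (-a-1) hm hδ)).add
          ((myE2 (-a) hm hδ).const_mul (l-m))
      refine h.congr_fun (fun x hx => ?_) measurableSet_Ioi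
      have hx0 : (0:ℝ) < x := lt_trans hδ hx
      unfold gtsF
      linear_combination ((l-m) * exp (-(m*x))) * (hxP1 x hx0)
  have hP1 : IntegrableOn (fun x : ℝ => gtsF1 l m x * x ^ (-a)) (Ioi 0) := by
    rw [← hsplit, integrableOn_union]
    constructor
    · refine Integrable.mono' ((hIoc_rpow (1-a) (by linarith)).const_mul ((2*l+m)*|l - m|))
        (((gtsF1_measurable l m).mul (by measurability)).aestronglyMeasurable) ?_
      rw [ae_restrict_iff' measurableSet_Ioc]
      refine Eventually.of_forall fun x hx => ?_
      have hx0 := hx.1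
      rw [norm_mul, Real.norm_eq_abs, Real.norm_eq_abs, abs_of_nonneg (rpow_nonneg hx0.le _)]
      calc |gtsF1 l m x| * x ^ (-a) ≤ ((2*l+m)*(|l - m| * x)) * x ^ (-a) :=
            mul_le_mul_of_nonneg_right (gtsF1_bound l m hl hm hx0 (hδ1 x hx))
              (rpow_nonneg hx0.le _)
        _ = (2*l+m)*|l - m| * x ^ (1-a) := by rw [hxP2 x hx0]; ring
    · have h : IntegrableOn (fun x : ℝ => -(l * (x ^ (-a) * exp (-(l*x))))
          + l * (x ^ (-a) * exp (-(m*x))) - m*(l-m) * (x ^ (1-a) * exp (-(m*x)))) (Ioi δ) :=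
        (((myE2 (-a) hl hδ).const_mul l).neg.add ((myE2 (-a) hm hδ).const_mul l)).sub
          ((myE2 (1-a) hm hδ).const_mul (m*(l-m)))
      refine h.congr_fun (fun x hx => ?_) measurableSet_Ioi
      have hx0 : (0:ℝ) < x := lt_trans hδ hx
      unfold gtsF1
      linear_combination (-(m*(l-m)) * exp (-(m*x))) * (hxP2 x hx0)
  have hP2 : IntegrableOn (fun x : ℝ => gtsF2 l m x * x ^ (1-a)) (Ioi 0) := by
    have h : IntegrableOn (fun x : ℝ => l^2 * (x ^ (1-a) * exp (-(l*x)))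
        - (2*l*m - m^2) * (x ^ (1-a) * exp (-(m*x)))
        + m^2*(l-m) * (x ^ (2-a) * exp (-(m*x)))) (Ioi 0) :=
      (((myE1 (p := 1-a) (by linarith) hl).const_mul (l^2)).sub
        ((myE1 (p := 1-a) (by linarith) hm).const_mul (2*l*m - m^2))).add
        ((myE1 (p := 2-a) (by linarith) hm).const_mul (m^2*(l-m)))
    refine h.congr_fun (fun x hx => ?_) measurableSet_Ioi
    have hx0 : (0:ℝ) < x := hx
    unfold gtsF2
    linear_combination (m^2*(l-m) * exp (-(m*x))) * (hxP3 x hx0)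
  -- value of ∫ P2
  have e1 : ∫ x in Ioi (0:ℝ), x ^ ((2-a)-1) * exp (-(l*x)) = (1/l)^(2-a) * Gamma (2-a) :=
    integral_rpow_mul_exp_neg_mul_Ioi (by linarith) hl
  have e2 : ∫ x in Ioi (0:ℝ), x ^ ((2-a)-1) * exp (-(m*x)) = (1/m)^(2-a) * Gamma (2-a) :=
    integral_rpow_mul_exp_neg_mul_Ioi (by linarith) hm
  have e3 : ∫ x in Ioi (0:ℝ), x ^ ((3-a)-1) * exp (-(m*x)) = (1/m)^(3-a) * Gamma (3-a) :=
    integral_rpow_mul_exp_neg_mul_Ioi (by linarith) hm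
  have hE1l : IntegrableOn (fun x : ℝ => x ^ ((2-a)-1) * exp (-(l*x))) (Ioi 0) :=
    myE1 (by linarith) hl
  have hE1m : IntegrableOn (fun x : ℝ => x ^ ((2-a)-1) * exp (-(m*x))) (Ioi 0) :=
    myE1 (by linarith) hm
  have hE2m : IntegrableOn (fun x : ℝ => x ^ ((3-a)-1) * exp (-(m*x))) (Ioi 0) :=
    myE1 (by linarith) hm
  have hIP2 : ∫ x in Ioi (0:ℝ), gtsF2 l m x * x ^ (1-a)
      = l^2 * ((1/l)^(2-a) * Gamma (2-a)) - (2*l*m - m^2) * ((1/m)^(2-a) * Gamma (2-a))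
        + m^2*(l-m) * ((1/m)^(3-a) * Gamma (3-a)) := by
    have hcongr : ∫ x in Ioi (0:ℝ), gtsF2 l m x * x ^ (1-a)
        = ∫ x in Ioi (0:ℝ), (l^2 * (x ^ ((2-a)-1) * exp (-(l*x)))
            - (2*l*m - m^2) * (x ^ ((2-a)-1) * exp (-(m*x)))
            + m^2*(l-m) * (x ^ ((3-a)-1) * exp (-(m*x)))) := by
      refine setIntegral_congr_fun measurableSet_Ioi (fun x hx => ?_)
      have hx0 : (0:ℝ) < x := hx
      have h21 : (2:ℝ)-a-1 = 1-a := by ring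
      have h31 : (3:ℝ)-a-1 = 2-a := by ring
      rw [h21, h31]
      unfold gtsF2
      linear_combination (-(m^2*(l-m)) * exp (-(m*x))) * (hxP3 x hx0)
    have j1 : Integrable (fun x : ℝ => l^2 * (x ^ ((2-a)-1) * exp (-(l*x))))
        (volume.restrict (Ioi 0)) := hE1l.const_mul _
    have j2 : Integrable (fun x : ℝ => (2*l*m - m^2) * (x ^ ((2-a)-1) * exp (-(m*x))))
        (volume.restrict (Ioi 0)) := hE1m.const_mul _
    have j3 : Integrable (fun x : ℝ => m^2*(l-m) * (x ^ ((3-a)-1) * exp (-(m*x))))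
        (volume.restrict (Ioi 0)) := hE2m.const_mul _
    have j12 : Integrable (fun x : ℝ => l^2 * (x ^ ((2-a)-1) * exp (-(l*x)))
        - (2*l*m - m^2) * (x ^ ((2-a)-1) * exp (-(m*x)))) (volume.restrict (Ioi 0)) := j1.sub j2
    rw [hcongr, integral_add j12 j3, integral_sub j1 j2,
      integral_const_mul, integral_const_mul, integral_const_mul, e1, e2, e3]
  -- limits at 0+ : generic rpow tendsto
  have hrpow0 : ∀ q : ℝ, 0 < q → Tendsto (fun x : ℝ => x ^ q) (nhdsWithin 0 (Ioi 0)) (nhds 0) := by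
    intro q hq
    have hc := (Real.continuousAt_rpow_const 0 q (Or.inr hq.le)).tendsto
    rw [Real.zero_rpow (ne_of_gt hq)] at hc
    exact hc.mono_left nhdsWithin_le_nhds
  -- atTop pieces
  have hT : ∀ s b : ℝ, 0 < b → Tendsto (fun x : ℝ => x ^ s * exp (-(b*x))) atTop (nhds 0) := by
    intro s b hb
    simpa [neg_mul] using tendsto_rpow_mul_exp_neg_mul_atTop_nhds_zero s b hb
  -- FTC 1
  have ftc1 : ∫ x in Ioi (0:ℝ),
      (gtsF2 l m x * (x ^ (1-a)/(1-a)) + gtsF1 l m x * x ^ (-a)) = 0 - 0 := by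
    refine myIntegral_Ioi_zero_of_hasDerivAt_of_tendsto
      (g := fun x => gtsF1 l m x * (x ^ (1-a)/(1-a))) ?_ ?_ ?_ ?_
    · intro x hx
      have hd := (gtsF1_deriv l m x).mul
        ((Real.hasDerivAt_rpow_const (p := 1-a) (Or.inl (ne_of_gt hx))).div_const (1-a))
      refine hd.congr_deriv ?_
      rw [show (1:ℝ)-a-1 = -a by ring, mul_div_cancel_left₀ _ ha1']
    · have h2 := hP2.const_mul (1/(1-a))
      have e : (fun x : ℝ => 1/(1-a) * (gtsF2 l m x * x ^ (1-a)))
          = fun x : ℝ => gtsF2 l m x * (x ^ (1-a)/(1-a)) := by funext x; ring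
      rw [e] at h2
      exact h2.add hP1
    · refine squeeze_zero_norm'
        (a := fun x : ℝ => (2*l+m)*|l - m|/|1-a| * x ^ (2-a)) ?_ ?_
      · filter_upwards [Ioc_mem_nhdsGT hδ] with x hx
        have hx0 := hx.1
        show ‖gtsF1 l m x * (x ^ (1-a)/(1-a))‖ ≤ (2*l+m)*|l - m|/|1-a| * x ^ (2-a)
        rw [norm_mul, Real.norm_eq_abs, Real.norm_eq_abs, abs_div,
          abs_of_nonneg (rpow_nonneg hx0.le _)]
        calc |gtsF1 l m x| * (x ^ (1-a)/|1-a|)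
            ≤ ((2*l+m)*(|l - m| * x)) * (x ^ (1-a)/|1-a|) :=
              mul_le_mul_of_nonneg_right (gtsF1_bound l m hl hm hx0 (hδ1 x hx))
                (by positivity)
          _ = (2*l+m)*|l - m|/|1-a| * (x * x ^ (1-a)) := by ring
          _ = (2*l+m)*|l - m|/|1-a| * x ^ (2-a) := by rw [← hxP3 x hx0]
      · have := (hrpow0 (2-a) (by linarith)).const_mul ((2*l+m)*|l - m|/|1-a|)
        simpa using this
    · have hTg := ((((hT (1-a) l hl).const_mul l).neg.add
        ((hT (1-a) m hm).const_mul l)).sub ((hT (2-a) m hm).const_mul (m*(l-m)))).mul_const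
        (1/(1-a))
      refine Tendsto.congr' ?_ (by simpa using hTg)
      filter_upwards [eventually_gt_atTop (0:ℝ)] with x hx0
      show (-(l * (x ^ (1-a) * exp (-(l*x)))) + l * (x ^ (1-a) * exp (-(m*x)))
          - m*(l-m) * (x ^ (2-a) * exp (-(m*x)))) * (1-a)⁻¹
        = gtsF1 l m x * (x ^ (1-a)/(1-a))
      rw [hxP3 x hx0]
      unfold gtsF1
      ring
  -- FTC 2
  have ftc2 : ∫ x in Ioi (0:ℝ),
      (gtsF1 l m x * (-(x ^ (-a))/a) + gtsF l m x * x ^ (-a-1)) = 0 - 0 := by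
    refine myIntegral_Ioi_zero_of_hasDerivAt_of_tendsto
      (g := fun x => gtsF l m x * (-(x ^ (-a))/a)) ?_ ?_ ?_ ?_
    · intro x hx
      have hd := (gtsF_deriv l m x).mul
        (((Real.hasDerivAt_rpow_const (p := -a) (Or.inl (ne_of_gt hx))).neg).div_const a)
      refine hd.congr_deriv ?_
      simp only [Pi.neg_apply]
      field_simp
      try ring
    · have h2 := hP1.const_mul (-(1/a))
      have e : (fun x : ℝ => -(1/a) * (gtsF1 l m x * x ^ (-a)))
          = fun x : ℝ => gtsF1 l m x * (-(x ^ (-a))/a) := by funext x; ring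
      rw [e] at h2
      exact h2.add hH
    · refine squeeze_zero_norm'
        (a := fun x : ℝ => (l-m)^2/|a| * x ^ (2-a)) ?_ ?_
      · filter_upwards [Ioc_mem_nhdsGT hδ] with x hx
        have hx0 := hx.1
        show ‖gtsF l m x * (-(x ^ (-a))/a)‖ ≤ (l-m)^2/|a| * x ^ (2-a)
        rw [norm_mul, Real.norm_eq_abs, Real.norm_eq_abs, abs_div, abs_neg,
          abs_of_nonneg (rpow_nonneg hx0.le _)]
        calc |gtsF l m x| * (x ^ (-a)/|a|)
            ≤ ((l-m)^2 * x^(2:ℕ)) * (x ^ (-a)/|a|) :=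
              mul_le_mul_of_nonneg_right (gtsF_bound l m hm hx0 (hδ1 x hx)) (by positivity)
          _ = (l-m)^2/|a| * (x^(2:ℕ) * x ^ (-a)) := by ring
          _ = (l-m)^2/|a| * x ^ (2-a) := by rw [hxQ2 x hx0]
      · have := (hrpow0 (2-a) (by linarith)).const_mul ((l-m)^2/|a|)
        simpa using this
    · have hTg := (((hT (-a) l hl).sub (hT (-a) m hm)).add
        ((hT (1-a) m hm).const_mul (l-m))).mul_const (-(1/a))
      refine Tendsto.congr' ?_ (by simpa using hTg)
      filter_upwards [eventually_gt_atTop (0:ℝ)] with x hx0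
      show -((x ^ (-a) * exp (-(l*x)) - x ^ (-a) * exp (-(m*x))
          + (l-m) * (x ^ (1-a) * exp (-(m*x)))) * a⁻¹)
        = gtsF l m x * (-(x ^ (-a))/a)
      rw [hxP2 x hx0]
      unfold gtsF
      ring
  -- combine
  have hIP1 : ∫ x in Ioi (0:ℝ), gtsF1 l m x * x ^ (-a)
      = -(1/(1-a)) * ∫ x in Ioi (0:ℝ), gtsF2 l m x * x ^ (1-a) := by
    have efun : (fun x : ℝ => gtsF1 l m x * x ^ (-a))
        = fun x : ℝ => (gtsF2 l m x * (x ^ (1-a)/(1-a)) + gtsF1 l m x * x ^ (-a))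
            + (-(1/(1-a))) * (gtsF2 l m x * x ^ (1-a)) := by
      funext x; field_simp; ring
    have hint1 : IntegrableOn (fun x : ℝ =>
        gtsF2 l m x * (x ^ (1-a)/(1-a)) + gtsF1 l m x * x ^ (-a)) (Ioi 0) := by
      have h2 := hP2.const_mul (1/(1-a))
      have e : (fun x : ℝ => 1/(1-a) * (gtsF2 l m x * x ^ (1-a)))
          = fun x : ℝ => gtsF2 l m x * (x ^ (1-a)/(1-a)) := by funext x; ring
      rw [e] at h2
      exact h2.add hP1
    rw [efun, integral_add hint1 (hP2.const_mul _), ftc1, integral_const_mul]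
    ring
  have hIH : ∫ x in Ioi (0:ℝ), gtsF l m x * x ^ (-a-1)
      = 1/a * ∫ x in Ioi (0:ℝ), gtsF1 l m x * x ^ (-a) := by
    have efun : (fun x : ℝ => gtsF l m x * x ^ (-a-1))
        = fun x : ℝ => (gtsF1 l m x * (-(x ^ (-a))/a) + gtsF l m x * x ^ (-a-1))
            + (1/a) * (gtsF1 l m x * x ^ (-a)) := by
      funext x; field_simp; ring
    have hint1 : IntegrableOn (fun x : ℝ =>
        gtsF1 l m x * (-(x ^ (-a))/a) + gtsF l m x * x ^ (-a-1)) (Ioi 0) := by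
      have h2 := hP1.const_mul (-(1/a))
      have e : (fun x : ℝ => -(1/a) * (gtsF1 l m x * x ^ (-a)))
          = fun x : ℝ => gtsF1 l m x * (-(x ^ (-a))/a) := by funext x; ring
      rw [e] at h2
      exact h2.add hH
    rw [efun, integral_add hint1 (hP1.const_mul _), ftc2, integral_const_mul]
    ring
  -- Gamma identities
  have hG2 : Gamma (2-a) = (1-a)*((-a)*Gamma (-a)) := by
    rw [show (2:ℝ)-a = (1-a)+1 by ring, Real.Gamma_add_one ha1',
      show (1:ℝ)-a = (-a)+1 by ring, Real.Gamma_add_one (neg_ne_zero.mpr hane)]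
  have hG3 : Gamma (3-a) = (2-a)*Gamma (2-a) := by
    rw [show (3:ℝ)-a = (2-a)+1 by ring, Real.Gamma_add_one ha2']
  -- rpow identities
  have kl : (1/l)^(2-a) = l^a / l^2 := by
    rw [eq_div_iff (by positivity : (l^2:ℝ) ≠ 0), ← Real.rpow_natCast l 2, one_div,
      Real.inv_rpow hl.le, ← Real.rpow_neg hl.le, ← Real.rpow_add hl]
    congr 1 <;> push_cast <;> try ring
  have km : (1/m)^(2-a) = m^a / m^2 := by
    rw [eq_div_iff (by positivity : (m^2:ℝ) ≠ 0), ← Real.rpow_natCast m 2, one_div,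
      Real.inv_rpow hm.le, ← Real.rpow_neg hm.le, ← Real.rpow_add hm]
    congr 1 <;> push_cast <;> try ring
  have km3 : (1/m)^(3-a) = m^(a-1) / m^2 := by
    rw [eq_div_iff (by positivity : (m^2:ℝ) ≠ 0), ← Real.rpow_natCast m 2, one_div,
      Real.inv_rpow hm.le, ← Real.rpow_neg hm.le, ← Real.rpow_add hm]
    congr 1 <;> push_cast <;> try ring
  have km1 : m ^ (a-1) = m ^ a / m := by
    have h := myRpow_succ hm (a-1)
    rw [show (a-1)+(1:ℝ) = a by ring] at h
    rw [h, mul_comm, mul_div_assoc, div_self hm.ne', mul_one]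
  constructor
  · rw [hfun]; exact hH
  · calc ∫ x in Ioi (0:ℝ), (exp (-((l-m)*x)) + (l-m)*x - 1) * (exp (-(m*x)) * x ^ (-a-1))
        = ∫ x in Ioi (0:ℝ), gtsF l m x * x ^ (-a-1) := by rw [hfun]
      _ = Gamma (-a) * ((a-1) * m ^ a - a * l * m ^ (a-1) + l ^ a) := by
        rw [hIH, hIP1, hIP2, hG3, hG2, kl, km, km3, km1]
        field_simp
        ring


/-- The GTS (generalized tempered stable) Lévy density with parameters
`(a₊, a₋, C₊, C₋, θ₊, θ₋)`. -/
noncomputable def gtsDensity (ap am Cp Cm tp tm : ℝ) (x : ℝ) : ℝ :=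
  if 0 < x then Cp * exp (-(tp * x)) * x ^ (-ap - 1)
  else if x < 0 then Cm * exp (-(tm * |x|)) * |x| ^ (-am - 1)
  else 0

/-- The 1-divergence (dual Kullback–Leibler divergence) between two
equivalent-martingale GTS processes. -/
theorem gts_dual_kl_divergence (ap am Cp Cm lp lm mp mm T : ℝ)
    (hap : ap ∈ Ioo (0:ℝ) 2) (hap1 : ap ≠ 1)
    (ham : am ∈ Ioo (0:ℝ) 2) (ham1 : am ≠ 1)
    (hCp : 0 < Cp) (hCm : 0 < Cm) (hlp : 0 < lp) (hlm : 0 < lm)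
    (hmp : 0 < mp) (hmm : 0 < mm) (hT : 0 < T)
    (r : ℝ → ℝ)
    (hrp : ∀ x : ℝ, 0 < x → r x = exp (-((lp - mp) * x)))
    (hrm : ∀ x : ℝ, x < 0 → r x = exp (-((lm - mm) * |x|))) :
    Integrable (fun x : ℝ =>
      (r x - Real.log (r x) - 1) * gtsDensity ap am Cp Cm mp mm x) ∧
    T * ∫ x : ℝ, (r x - Real.log (r x) - 1) * gtsDensity ap am Cp Cm mp mm x
      = T * Cp * Gamma (-ap) * ((ap - 1) * mp ^ ap - ap * lp * mp ^ (ap - 1) + lp ^ ap)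
        + T * Cm * Gamma (-am) * ((am - 1) * mm ^ am - am * lm * mm ^ (am - 1) + lm ^ am) := by
  obtain ⟨hip, hvp⟩ := gts_side hap.1 hap.2 hap1 hlp hmp
  obtain ⟨him, hvm⟩ := gts_side ham.1 ham.2 ham1 hlm hmm
  set F : ℝ → ℝ := fun x =>
    (r x - Real.log (r x) - 1) * gtsDensity ap am Cp Cm mp mm x with hF
  set Sp : ℝ → ℝ := fun x =>
    (exp (-((lp-mp)*x)) + (lp-mp)*x - 1) * (exp (-(mp*x)) * x ^ (-ap-1)) with hSp
  set Sm : ℝ → ℝ := fun x =>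
    (exp (-((lm-mm)*x)) + (lm-mm)*x - 1) * (exp (-(mm*x)) * x ^ (-am-1)) with hSm
  have hFpos : ∀ x : ℝ, 0 < x → F x = Cp * Sp x := by
    intro x hx
    rw [hF, hSp]
    simp only [gtsDensity, if_pos hx]
    rw [hrp x hx, Real.log_exp]
    ring
  have hFneg : ∀ x : ℝ, x < 0 → F x = Cm * Sm (-x) := by
    intro x hx
    rw [hF, hSm]
    simp only [gtsDensity, if_neg (not_lt.mpr hx.le), if_pos hx]
    rw [hrm x hx, Real.log_exp, abs_of_neg hx]
    ring
  -- integrability on the three pieces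
  have hIoi : IntegrableOn F (Ioi 0) := by
    have h1 : IntegrableOn (fun x : ℝ => Cp * Sp x) (Ioi 0) := hip.const_mul Cp
    exact h1.congr_fun (fun x hx => (hFpos x hx).symm) measurableSet_Ioi
  have hIio : IntegrableOn F (Iio 0) := by
    have A : MeasurableEmbedding (fun x : ℝ => -x) := (Homeomorph.neg ℝ).measurableEmbedding
    have h1 : IntegrableOn (fun x : ℝ => Cm * Sm (-x)) (Iio 0) := by
      rw [← Measure.map_neg_eq_self (volume : Measure ℝ), A.integrableOn_map_iff]
      simp only [Function.comp_def, neg_neg, neg_preimage, neg_Iio, neg_zero]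
      exact him.const_mul Cm
    exact h1.congr_fun (fun x hx => (hFneg x hx).symm) measurableSet_Iio
  have h0 : IntegrableOn F {(0:ℝ)} := by
    have hz : (volume : Measure ℝ).restrict {(0:ℝ)} = 0 :=
      Measure.restrict_eq_zero.mpr (measure_singleton 0)
    rw [IntegrableOn, hz]
    exact integrable_zero_measure
  have hIic : IntegrableOn F (Iic 0) := by
    rw [← Iio_union_right]
    exact hIio.union h0
  have hint : Integrable F := by
    rw [← integrableOn_univ, ← Iic_union_Ioi (a := (0:ℝ))]
    exact hIic.union hIoi
  refine ⟨hint, ?_⟩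
  have hsplit : ∫ x : ℝ, F x = (∫ x in Iic (0:ℝ), F x) + ∫ x in Ioi (0:ℝ), F x := by
    rw [← setIntegral_union (Iic_disjoint_Ioi le_rfl) measurableSet_Ioi hIic hIoi,
      Iic_union_Ioi, setIntegral_univ]
  have hneg : ∫ x in Iic (0:ℝ), F x = Cm * (Gamma (-am) *
      ((am - 1) * mm ^ am - am * lm * mm ^ (am - 1) + lm ^ am)) := by
    have h1 := integral_comp_neg_Ioi (0:ℝ) F
    rw [neg_zero] at h1
    rw [← h1]
    have h2 : ∫ x in Ioi (0:ℝ), F (-x) = ∫ x in Ioi (0:ℝ), Cm * Sm x := by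
      refine setIntegral_congr_fun measurableSet_Ioi (fun x hx => ?_)
      rw [hFneg (-x) (by simpa using hx), neg_neg]
    rw [h2, integral_const_mul, hvm]
  have hpos : ∫ x in Ioi (0:ℝ), F x = Cp * (Gamma (-ap) *
      ((ap - 1) * mp ^ ap - ap * lp * mp ^ (ap - 1) + lp ^ ap)) := by
    have h2 : ∫ x in Ioi (0:ℝ), F x = ∫ x in Ioi (0:ℝ), Cp * Sp x :=
      setIntegral_congr_fun measurableSet_Ioi (fun x hx => hFpos x hx)
    rw [h2, integral_const_mul, hvp]
  rw [hsplit, hneg, hpos]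
  ring
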